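/- For fixed z > 0, the conditional type S error rate typeS(μ) = Φ(-z-μ) / (Φ(-z-μ) + 1 - Φ(z-μ)) satisfies typeS(0) = 1/2 and typeS(μ) < 1/2 for all μ > 0. -/

import Mathlib

open MeasureTheory ProbabilityTheory Real Set Filter

noncomputable def Phi (x : ℝ) : ℝ := ((gaussianReal 0 1) (Set.Iic x)).toReal
noncomputable def PhiInv : ℝ → ℝ := Function.invFun Phi
noncomputable def phi (x : ℝ) : ℝ := Real.exp (-x^2/2) / Real.sqrt (2*Real.pi)

lemma gauss_ne_top (s : Set ℝ) : (gaussianReal 0 1) s ≠ ⊤ :=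
  (measure_lt_top _ _).ne

lemma Phi_strictMono : StrictMono Phi := by
  intro a b hab
  have h1 : Iic b = Iic a ∪ Ioc a b := (Iic_union_Ioc_eq_Iic hab.le).symm
  have hdisj : Disjoint (Iic a) (Ioc a b) := by
    simp [Set.disjoint_left]
    intro x hx; exact fun h => absurd hx (not_le.mpr h)
  have h2 : (gaussianReal 0 1) (Iic b) =
      (gaussianReal 0 1) (Iic a) + (gaussianReal 0 1) (Ioc a b) := by
    rw [h1, measure_union hdisj measurableSet_Ioc]
  have hpos : 0 < (gaussianReal 0 1) (Ioc a b) := by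
    by_contra h
    push_neg at h
    have h0 : (gaussianReal 0 1) (Ioc a b) = 0 := le_antisymm h zero_le
    have := gaussianReal_absolutelyContinuous' 0 (v := 1) one_ne_zero h0
    have hv : (volume : Measure ℝ) (Ioc a b) = 0 := this
    simp [Real.volume_Ioc, hab] at hv
    linarith [hv]
  unfold Phi
  rw [ENNReal.toReal_lt_toReal (gauss_ne_top _) (gauss_ne_top _), h2]
  exact ENNReal.lt_add_right (gauss_ne_top _) hpos.ne'

lemma Phi_neg (x : ℝ) : Phi (-x) = 1 - Phi x := by
  have hmap : (gaussianReal 0 1).map (fun y => -y) = gaussianReal 0 1 := by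
    have := gaussianReal_map_const_mul (μ := 0) (v := 1) (-1)
    simpa [neg_one_mul] using this
  have h1 : (gaussianReal 0 1) (Iic (-x)) = (gaussianReal 0 1) (Ici x) := by
    calc (gaussianReal 0 1) (Iic (-x))
        = ((gaussianReal 0 1).map (fun y => -y)) (Iic (-x)) := by rw [hmap]
      _ = (gaussianReal 0 1) ((fun y : ℝ => -y) ⁻¹' Iic (-x)) := by
          rw [Measure.map_apply (by fun_prop) measurableSet_Iic]
      _ = (gaussianReal 0 1) (Ici x) := by congr 1; ext y; simp
  have h3 : (gaussianReal 0 1) (Iio x) = (gaussianReal 0 1) (Iic x) := by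
    have hx : (gaussianReal 0 1) {x} = 0 :=
      gaussianReal_absolutelyContinuous 0 one_ne_zero (by simp)
    have hu : Iic x = Iio x ∪ {x} := by ext y; simp [le_iff_lt_or_eq]
    rw [hu, measure_union (by simp [Set.disjoint_left]; exact fun a h => ne_of_lt h) (measurableSet_singleton x), hx, add_zero]
  have h2 : (gaussianReal 0 1) (Ici x) + (gaussianReal 0 1) (Iic x) = 1 := by
    rw [← h3, ← measure_union (by simp [Set.disjoint_left]) measurableSet_Iio,
      show Ici x ∪ Iio x = univ by ext y; simp [le_or_gt], measure_univ]
  unfold Phi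
  rw [h1]
  have h4 := ENNReal.toReal_add (gauss_ne_top (Ici x)) (gauss_ne_top (Iic x))
  rw [h2] at h4
  simp at h4
  linarith

lemma Phi_pos (x : ℝ) : 0 < Phi x := by
  have : Phi (x - 1) < Phi x := Phi_strictMono (by linarith)
  have h0 : 0 ≤ Phi (x - 1) := ENNReal.toReal_nonneg
  linarith

theorem typeS_half_and_lt (z : ℝ) (hz : 0 < z) :
    Phi (-z - 0) / (Phi (-z - 0) + 1 - Phi (z - 0)) = 1/2 ∧
    ∀ μ : ℝ, 0 < μ →
      Phi (-z - μ) / (Phi (-z - μ) + 1 - Phi (z - μ)) < 1/2 := by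
  constructor
  · have h := Phi_neg z
    have hp := Phi_pos (-z)
    rw [sub_zero, sub_zero]
    rw [show Phi (-z) + 1 - Phi z = 2 * Phi (-z) by rw [h]; ring]
    field_simp
  · intro μ hμ
    set a := Phi (-z - μ)
    have hb : 1 - Phi (z - μ) = Phi (μ - z) := by
      have := Phi_neg (z - μ)
      rw [show -(z - μ) = μ - z by ring] at this
      linarith
    have hab : a < Phi (μ - z) := Phi_strictMono (by linarith)
    have ha : 0 < a := Phi_pos _
    have hbpos : 0 < Phi (μ - z) := Phi_pos _
    rw [show a + 1 - Phi (z - μ) = a + (1 - Phi (z - μ)) by ring, hb]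
    rw [div_lt_iff₀ (by linarith)]
    linarith
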